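/- The interpretation of composition of sum-over-paths morphisms is the composition of interpretations: given f represented by s_f ∑_{y⃗_f} e^{2iπ P_f} |O⃗_f⟩⟨I⃗_f| and g by s_g ∑_{y⃗_g} e^{2iπ P_g} |O⃗_g⟩⟨I⃗_g| with O⃗_g and I⃗_f of the same length n, the linear map (s_f s_g / 2^n) ∑_{y⃗_f, y⃗_g, y⃗ ∈ {0,1}^n} e^{2iπ(P_g + P_f + (O⃗_g·y⃗ + I⃗_f·y⃗)/2)} |O⃗_f⟩⟨I⃗_g| equals the matrix product (∑ e^{2iπP_f}|O⃗_f⟩⟨I⃗_f|)·(∑ e^{2iπP_g}|O⃗_g⟩⟨I⃗_g|) scaled by s_f s_g. -/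

import Mathlib

noncomputable section

/-- `e2pi x = e^{2iπx}`. -/
def e2pi (x : ℝ) : ℂ := Complex.exp (2 * (Real.pi : ℂ) * Complex.I * (x : ℂ))

/-- Integer dot product of two Boolean vectors, as a real number. -/
def dotR {n : ℕ} (a y : Fin n → Bool) : ℝ :=
  ∑ i, (if a i then (1 : ℝ) else 0) * (if y i then 1 else 0)

lemma e2pi_add (x y : ℝ) : e2pi (x + y) = e2pi x * e2pi y := by
  simp [e2pi, mul_add, Complex.exp_add]

lemma e2pi_zero : e2pi 0 = 1 := by simp [e2pi]

lemma e2pi_one : e2pi 1 = 1 := by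
  simp only [e2pi, Complex.ofReal_one, mul_one]
  exact Complex.exp_two_pi_mul_I

lemma e2pi_half : e2pi 2⁻¹ = -1 := by
  simp only [e2pi]
  rw [show (2 : ℂ) * (Real.pi : ℂ) * Complex.I * (((2:ℝ)⁻¹ : ℝ):ℂ) = Real.pi * Complex.I by
    push_cast; ring, Complex.exp_pi_mul_I]

lemma e2pi_sum {ι : Type*} (s : Finset ι) (f : ι → ℝ) :
    e2pi (∑ i ∈ s, f i) = ∏ i ∈ s, e2pi (f i) := by
  simp only [e2pi]
  rw [← Complex.exp_sum]
  congr 1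
  push_cast
  rw [Finset.mul_sum]

lemma orth {n : ℕ} (a b : Fin n → Bool) :
    ∑ y : Fin n → Bool, e2pi ((dotR a y + dotR b y) / 2)
      = if a = b then (2:ℂ)^n else 0 := by
  have h1 : ∀ y : Fin n → Bool, (dotR a y + dotR b y) / 2
      = ∑ i, (((if a i then (1:ℝ) else 0) + (if b i then 1 else 0)) * (if y i then 1 else 0)) / 2 := by
    intro y
    simp only [dotR, ← Finset.sum_add_distrib, ← Finset.sum_div]
    congr 1; apply Finset.sum_congr rfl; intro i _; ring
  calc ∑ y : Fin n → Bool, e2pi ((dotR a y + dotR b y) / 2)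
      = ∑ y : Fin n → Bool, ∏ i,
          e2pi ((((if a i then (1:ℝ) else 0) + (if b i then 1 else 0)) * (if y i then 1 else 0)) / 2) := by
        refine Finset.sum_congr rfl fun y _ => ?_
        rw [h1 y, e2pi_sum]
    _ = ∏ i, ∑ v : Bool,
          e2pi ((((if a i then (1:ℝ) else 0) + (if b i then 1 else 0)) * (if v then 1 else 0)) / 2) := by
        rw [Finset.prod_univ_sum]
        rw [Fintype.piFinset_univ]
    _ = ∏ i, (if a i = b i then (2:ℂ) else 0) := by
        refine Finset.prod_congr rfl fun i _ => ?_
        cases ha : a i <;> cases hb : b i <;>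
          simp [Fintype.sum_bool, e2pi_zero, e2pi_half] <;>
          norm_num [show ((1:ℝ)+1)/2 = 1 by norm_num, e2pi_one]
    _ = if a = b then (2:ℂ)^n else 0 := by
        by_cases h : a = b
        · simp [h]
        · obtain ⟨i, hi⟩ : ∃ i, a i ≠ b i := by
            by_contra hc; push_neg at hc; exact h (funext hc)
          rw [if_neg h]
          exact Finset.prod_eq_zero (Finset.mem_univ i) (by simp [hi])

lemma delta_sum {n : ℕ} (u v : Fin n → Bool) :
    ∑ b : Fin n → Bool, (if u = b then (1:ℂ) else 0) * (if v = b then 1 else 0)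
      = if u = v then 1 else 0 := by
  simp only [boole_mul, Finset.sum_ite_eq, Finset.mem_univ, if_true]
  exact if_congr eq_comm rfl rfl


/-- The sum-over-paths formula for composition is sound: the matrix of the composite
term `(s_f s_g/2^n)·∑ e^{2iπ(P_g + P_f + (O⃗_g·y⃗ + I⃗_f·y⃗)/2)} |O⃗_f⟩⟨I⃗_g|` equals the
product of the matrices of `f` and `g`. -/
theorem stmt_13 (kf kg m n p : ℕ) (sf sg : ℂ)
    (Pf : (Fin kf → Bool) → ℝ) (Pg : (Fin kg → Bool) → ℝ)
    (Of : (Fin kf → Bool) → (Fin m → Bool)) (If : (Fin kf → Bool) → (Fin n → Bool))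
    (Og : (Fin kg → Bool) → (Fin n → Bool)) (Ig : (Fin kg → Bool) → (Fin p → Bool)) :
    (Matrix.of fun (a : Fin m → Bool) (c : Fin p → Bool) =>
      (sf * sg / 2 ^ n) * ∑ yf : Fin kf → Bool, ∑ yg : Fin kg → Bool,
        ∑ y : Fin n → Bool,
          e2pi (Pg yg + Pf yf + (dotR (Og yg) y + dotR (If yf) y) / 2)
            * (if Of yf = a then 1 else 0) * (if Ig yg = c then 1 else 0))
    = (Matrix.of fun (a : Fin m → Bool) (b : Fin n → Bool) =>
        sf * ∑ yf : Fin kf → Bool,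
          e2pi (Pf yf) * (if Of yf = a then 1 else 0) * (if If yf = b then 1 else 0))
      * (Matrix.of fun (b : Fin n → Bool) (c : Fin p → Bool) =>
        sg * ∑ yg : Fin kg → Bool,
          e2pi (Pg yg) * (if Og yg = b then 1 else 0) * (if Ig yg = c then 1 else 0)) := by
  have h2n : ((2:ℂ)^n) ≠ 0 := pow_ne_zero _ two_ne_zero
  ext a c
  simp only [Matrix.mul_apply, Matrix.of_apply]
  set A : (Fin kf → Bool) → ℂ := fun yf => if Of yf = a then 1 else 0 with hA
  set C : (Fin kg → Bool) → ℂ := fun yg => if Ig yg = c then 1 else 0 with hC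
  have key : ∀ (yf : Fin kf → Bool) (yg : Fin kg → Bool),
      (∑ y : Fin n → Bool,
        e2pi (Pg yg + Pf yf + (dotR (Og yg) y + dotR (If yf) y) / 2))
      = e2pi (Pg yg) * e2pi (Pf yf) * (if If yf = Og yg then (2:ℂ)^n else 0) := by
    intro yf yg
    have h : ∀ y : Fin n → Bool,
        e2pi (Pg yg + Pf yf + (dotR (Og yg) y + dotR (If yf) y) / 2)
        = e2pi (Pg yg) * e2pi (Pf yf) * e2pi ((dotR (Og yg) y + dotR (If yf) y) / 2) := by
      intro y; rw [e2pi_add, e2pi_add, mul_assoc]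
    simp only [h, ← Finset.mul_sum]
    rw [orth]
    congr 1
    exact if_congr eq_comm rfl rfl
  calc (sf * sg / 2 ^ n) * ∑ yf : Fin kf → Bool, ∑ yg : Fin kg → Bool,
        ∑ y : Fin n → Bool,
          e2pi (Pg yg + Pf yf + (dotR (Og yg) y + dotR (If yf) y) / 2) * A yf * C yg
      = (sf * sg / 2 ^ n) * ∑ yf, ∑ yg,
          (e2pi (Pg yg) * e2pi (Pf yf) * (if If yf = Og yg then (2:ℂ)^n else 0)) * A yf * C yg := by
        congr 1
        refine Finset.sum_congr rfl fun yf _ => Finset.sum_congr rfl fun yg _ => ?_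
        rw [← key yf yg, Finset.sum_mul, Finset.sum_mul]
    _ = sf * sg * ∑ yf, ∑ yg,
          e2pi (Pg yg) * e2pi (Pf yf) * (if If yf = Og yg then (1:ℂ) else 0) * A yf * C yg := by
        simp only [Finset.mul_sum]
        refine Finset.sum_congr rfl fun yf _ => Finset.sum_congr rfl fun yg _ => ?_
        by_cases h : If yf = Og yg
        · simp only [h, if_true]
          field_simp
        · simp [h]
    _ = ∑ b : Fin n → Bool,
          (sf * ∑ yf, e2pi (Pf yf) * A yf * (if If yf = b then 1 else 0)) *
          (sg * ∑ yg, e2pi (Pg yg) * (if Og yg = b then 1 else 0) * C yg) := by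
        have step1 : ∀ b : Fin n → Bool,
            (sf * ∑ yf, e2pi (Pf yf) * A yf * (if If yf = b then 1 else 0)) *
            (sg * ∑ yg, e2pi (Pg yg) * (if Og yg = b then 1 else 0) * C yg)
            = ∑ yf, ∑ yg, sf * sg *
                ((e2pi (Pf yf) * A yf * (if If yf = b then 1 else 0)) *
                 (e2pi (Pg yg) * (if Og yg = b then 1 else 0) * C yg)) := by
          intro b
          rw [mul_mul_mul_comm, Finset.sum_mul_sum]
          simp only [Finset.mul_sum]
        simp only [step1]
        symm
        rw [Finset.sum_comm]
        simp only [Finset.mul_sum]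
        refine Finset.sum_congr rfl fun yf _ => ?_
        rw [Finset.sum_comm]
        refine Finset.sum_congr rfl fun yg _ => ?_
        have : ∀ b : Fin n → Bool,
            sf * sg * ((e2pi (Pf yf) * A yf * (if If yf = b then 1 else 0)) *
              (e2pi (Pg yg) * (if Og yg = b then 1 else 0) * C yg))
            = (sf * sg * (e2pi (Pf yf) * A yf * (e2pi (Pg yg) * C yg))) *
              ((if If yf = b then 1 else 0) * (if Og yg = b then 1 else 0)) := by
          intro b; ring
        simp only [this, ← Finset.mul_sum, delta_sum]
        ring_nf
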